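/- arXiv:2004.10146 — 3 statements merged into one kernel-verified Lean document; each statement's English description precedes it below -/
import Mathlib

section
/- Let v ∈ ℕ with p-adic digits a_i(v) and leading digit position j := j(v), and let w ∈ C_v. Then the p-adic digits of w agree with those of v in all positions i with 1 ≤ i < j, i.e. a_i(w) = a_i(v) for all 1 ≤ i < j. -/
open scoped Classical

namespace SL2

/-- the `i`-th digit of `v` in base `p`. -/
def digit (p v i : ℕ) : ℕ := v / p ^ i % p

/-- position of the leading (highest nonzero) digit of `v ≥ 1`. -/
def lead (p v : ℕ) : ℕ := Nat.log p v

/-- a nonempty set of consecutive integers -/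
def IsStretch (S : Finset ℕ) : Prop :=
  S.Nonempty ∧ ∀ a ∈ S, ∀ b ∈ S, ∀ c, a ≤ c → c ≤ b → c ∈ S

/-- `S` is down-admissible for `v`. -/
def DownAdm (p v : ℕ) (S : Finset ℕ) : Prop :=
  (∀ s ∈ S, (s = 0 ∨ s - 1 ∉ S) → digit p v s ≠ 0) ∧
  (∀ s ∈ S, digit p v (s + 1) = 0 → s + 1 ∈ S)

/-- `S` is up-admissible for `v`. -/
def UpAdm (p v : ℕ) (S : Finset ℕ) : Prop :=
  (∀ s ∈ S, (s = 0 ∨ s - 1 ∉ S) → digit p v s ≠ 0) ∧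
  (∀ s ∈ S, digit p v (s + 1) = p - 1 → s + 1 ∈ S)

/-- the downward reflection `v[S]`. -/
def reflDown (p v : ℕ) (S : Finset ℕ) : ℕ :=
  (∑ i ∈ Finset.range (lead p v + 1),
    (if i ∈ S then -((digit p v i : ℤ) * p ^ i) else ((digit p v i : ℤ) * p ^ i))).toNat

/-- the upward reflection `v(S)`. -/
def reflUp (p v : ℕ) (S : Finset ℕ) : ℕ :=
  (∑ i ∈ Finset.range (lead p v + 2),
    (if i ∈ S then -((digit p v i : ℤ) * p ^ i)
     else if i - 1 ∈ S ∧ 1 ≤ i then ((digit p v i : ℤ) + 2) * p ^ i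
     else (digit p v i : ℤ) * p ^ i)).toNat

/-- `T` is the down-admissible hull of `S` for `v`. -/
def IsHull (p v : ℕ) (S T : Finset ℕ) : Prop :=
  DownAdm p v T ∧ S ⊆ T ∧ ∀ T', DownAdm p v T' → S ⊆ T' → T ⊆ T'

noncomputable def hull (p v : ℕ) (S : Finset ℕ) : Finset ℕ :=
  if h : ∃ T, IsHull p v S T then h.choose else ∅

/-- `v[⟨i⟩]`, the downward reflection of `v` along the down-admissible hull of `{i}`. -/
noncomputable def reflDownHull (p v i : ℕ) : ℕ := reflDown p v (hull p v {i})

/-- `D_v`, the set of positions of nonzero non-leading digits of `v`. -/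
def Dset (p v : ℕ) : Finset ℕ :=
  (Finset.range (lead p v)).filter (fun i => digit p v i ≠ 0)

/-- one step of the relation generating `∼_S`. -/
noncomputable def SimStep (p : ℕ) (S : Finset ℕ) (v w : ℕ) : Prop :=
  v ≠ w ∧ S ⊆ Dset p v ∧ S ⊆ Dset p w ∧
    ∃ k ∈ Dset p v, k ∉ S ∧ w = reflDownHull p v k

/-- the equivalence relation `∼_S`. -/
noncomputable def Sim (p : ℕ) (S : Finset ℕ) (v w : ℕ) : Prop :=
  Relation.EqvGen (SimStep p S) v w

/-- the set `C_v`. -/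
noncomputable def Cset (p v : ℕ) : Set ℕ := {w | 1 ≤ w ∧ Sim p (Dset p v) v w}

/-- minimal down-admissible stretch for `v`. -/
def MinDownStretch (p v : ℕ) (S : Finset ℕ) : Prop :=
  DownAdm p v S ∧ IsStretch S ∧
    ∀ T ⊆ S, DownAdm p v T → IsStretch T → T = S

/-- minimal up-admissible stretch for `v`. -/
def MinUpStretch (p v : ℕ) (S : Finset ℕ) : Prop :=
  UpAdm p v S ∧ IsStretch S ∧
    ∀ T ⊆ S, UpAdm p v T → IsStretch T → T = S

/-- adjacency in the graph underlying the quiver algebra. -/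
def BlockAdj (p : ℕ) (v w : ℕ) : Prop :=
  (1 ≤ v ∧ 1 ≤ w) ∧
    ((∃ S, MinDownStretch p v S ∧ w = reflDown p v S) ∨
     (∃ S, MinDownStretch p w S ∧ v = reflDown p w S))

/-- the block `⟨e⟩_p`: the connected component of `e`. -/
def block (p e : ℕ) : Set ℕ := {v | 1 ≤ v ∧ Relation.ReflTransGen (BlockAdj p) e v}

/-- `e` is an eve: exactly one nonzero `p`-adic digit. -/
def IsEve (p e : ℕ) : Prop := 1 ≤ e ∧ Dset p e = ∅


section Aux

variable {p : ℕ}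

lemma digit_lt_base (hp : 1 < p) (v i : ℕ) : digit p v i < p :=
  Nat.mod_lt _ (by omega)

lemma sum_digit_eq_mod (v n : ℕ) :
    ∑ i ∈ Finset.range n, digit p v i * p ^ i = v % p ^ n := by
  induction n with
  | zero => simp [Nat.mod_one]
  | succ n ih =>
    rw [Finset.sum_range_succ, ih, Nat.mod_pow_succ]
    unfold digit; ring

lemma pow_le_of_digit_ne_zero {v i : ℕ} (h : digit p v i ≠ 0) : p ^ i ≤ v := by
  have h1 : v / p ^ i ≠ 0 := fun h0 => h (by simp [digit, h0])
  rcases Nat.eq_zero_or_pos (p ^ i) with h2 | h2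
  · simp [digit, h2] at h1
  · exact (Nat.one_le_div_iff h2).mp (Nat.pos_of_ne_zero h1)

lemma le_lead_of_digit (hp : 1 < p) {v i : ℕ} (h : digit p v i ≠ 0) : i ≤ lead p v := by
  have h1 := pow_le_of_digit_ne_zero h
  have hv : v ≠ 0 := by have := Nat.one_le_pow i p (by omega); omega
  exact (Nat.le_log_iff_pow_le hp hv).mpr h1

lemma digit_lead_ne_zero (hp : 1 < p) {v : ℕ} (hv : 1 ≤ v) : digit p v (lead p v) ≠ 0 := by
  have h1 : p ^ Nat.log p v ≤ v := Nat.pow_log_le_self p (by omega)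
  have h2 : v < p ^ (Nat.log p v + 1) := Nat.lt_pow_succ_log_self hp v
  have h3 : 1 ≤ v / p ^ Nat.log p v := (Nat.one_le_div_iff (Nat.pow_pos (by omega))).mpr h1
  have h4 : v / p ^ Nat.log p v < p := by
    rw [Nat.div_lt_iff_lt_mul (Nat.pow_pos (by omega))]
    calc v < p ^ (Nat.log p v + 1) := h2
    _ = p * p ^ Nat.log p v := by ring
  show v / p ^ Nat.log p v % p ≠ 0
  rw [Nat.mod_eq_of_lt h4]
  omega

lemma digit_add_pow_mul (hp : 0 < p) (a c i : ℕ) :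
    digit p (a + p ^ (i + 1) * c) i = digit p a i := by
  unfold digit
  rw [show p ^ (i+1) * c = p ^ i * (p * c) by ring,
    Nat.add_mul_div_left _ _ (Nat.pow_pos hp), Nat.add_mul_mod_self_left]

/-- Main computation: the downward reflection along the hull of `{k}`. -/
lemma step_digits (hp : 1 < p) {x k : ℕ} (hk : digit p x k ≠ 0) (hkl : k < lead p x) :
    2 * digit p x k * p ^ k ≤ x ∧
    reflDownHull p x k = x - 2 * digit p x k * p ^ k ∧
    digit p (x - 2 * digit p x k * p ^ k) k = p - digit p x k := by
  have hp0 : 0 < p := by omega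
  have hx0 : 1 ≤ x := le_trans (Nat.one_le_pow _ _ hp0) (pow_le_of_digit_ne_zero hk)
  have hex : ∃ m, k < m ∧ digit p x m ≠ 0 := ⟨lead p x, hkl, digit_lead_ne_zero hp hx0⟩
  obtain ⟨t, htk, htd, hmin⟩ :
      ∃ t, k < t ∧ digit p x t ≠ 0 ∧ ∀ m, k < m → m < t → digit p x m = 0 := by
    refine ⟨Nat.find hex, (Nat.find_spec hex).1, (Nat.find_spec hex).2, ?_⟩
    intro m h1 h2
    by_contra h
    exact Nat.find_min hex h2 ⟨h1, h⟩
  have htL : t ≤ lead p x := le_lead_of_digit hp htd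
  have hdlt : digit p x k < p := digit_lt_base hp x k
  have hd1 : 1 ≤ digit p x k := Nat.one_le_iff_ne_zero.mpr hk
  -- the hull is the interval [k, t-1]
  set S : Finset ℕ := Finset.Icc k (t - 1) with hS
  have hmemS : ∀ i, i ∈ S ↔ k ≤ i ∧ i ≤ t - 1 := fun i => Finset.mem_Icc
  have hadm : DownAdm p x S := by
    constructor
    · intro s hs hcond
      rw [hmemS] at hs
      have hsk : s = k := by
        rcases hcond with h0 | h1
        · omega
        · rw [hmemS] at h1; omega
      rwa [hsk]
    · intro s hs h0
      rw [hmemS] at hs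
      rw [hmemS]
      rcases Nat.lt_or_ge (s + 1) t with h | h
      · omega
      · exfalso
        have hst : s + 1 = t := by omega
        apply htd
        rwa [hst] at h0
  have hsubT : ∀ T, DownAdm p x T → k ∈ T → S ⊆ T := by
    intro T hT hkT
    have hj : ∀ j, k + j ≤ t - 1 → k + j ∈ T := by
      intro j
      induction j with
      | zero => intro _; simpa using hkT
      | succ j ih =>
        intro hjle
        have hjT : k + j ∈ T := ih (by omega)
        have hd0 : digit p x (k + j + 1) = 0 := hmin _ (by omega) (by omega)
        exact hT.2 _ hjT hd0
    intro i hi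
    rw [hmemS] at hi
    have h1 := hj (i - k) (by omega)
    rwa [show k + (i - k) = i by omega] at h1
  have hisHull : IsHull p x {k} S := by
    refine ⟨hadm, ?_, ?_⟩
    · intro i hi
      simp only [Finset.mem_singleton] at hi
      subst hi
      rw [hmemS]; omega
    · intro T hT hsub'
      exact hsubT T hT (hsub' (by simp))
  have hhull : hull p x {k} = S := by
    have hex2 : ∃ T, IsHull p x {k} T := ⟨S, hisHull⟩
    rw [hull, dif_pos hex2]
    have h2 := hex2.choose_spec
    exact Finset.Subset.antisymm (h2.2.2 S hisHull.1 hisHull.2.1)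
      (hisHull.2.2 _ h2.1 h2.2.1)
  -- bound: 2 * d * p ^ k ≤ x
  have hle : 2 * digit p x k * p ^ k ≤ x := by
    have h1 : ∑ i ∈ Finset.range (t + 1), digit p x i * p ^ i = x % p ^ (t + 1) :=
      sum_digit_eq_mod x (t + 1)
    have hpair : ({k, t} : Finset ℕ) ⊆ Finset.range (t + 1) := by
      intro i hi
      simp only [Finset.mem_insert, Finset.mem_singleton] at hi
      rcases hi with h | h <;> simp [h] <;> omega
    have h2 : digit p x k * p ^ k + digit p x t * p ^ t ≤ x % p ^ (t + 1) := by
      have h2a := Finset.sum_le_sum_of_subset (f := fun i => digit p x i * p ^ i) hpair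
      rwa [Finset.sum_pair (show k ≠ t by omega), h1] at h2a
    have h3 : x % p ^ (t + 1) ≤ x := Nat.mod_le _ _
    have h4 : p ^ (k + 1) ≤ p ^ t := Nat.pow_le_pow_right (by omega) (by omega)
    have h5 : p ^ t ≤ digit p x t * p ^ t := Nat.le_mul_of_pos_left _ (Nat.pos_of_ne_zero htd)
    have h6 : digit p x k * p ^ k < p ^ (k + 1) := by
      rw [pow_succ, mul_comm (p ^ k) p]
      exact (Nat.mul_lt_mul_right (Nat.pow_pos hp0)).mpr hdlt
    have hsplit : 2 * digit p x k * p ^ k = digit p x k * p ^ k + digit p x k * p ^ k := by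
      ring
    omega
  refine ⟨hle, ?_, ?_⟩
  · -- reflDownHull computation
    rw [reflDownHull, hhull, reflDown]
    have hSsub : S ⊆ Finset.range (lead p x + 1) := by
      intro i hi
      rw [hmemS] at hi
      simp only [Finset.mem_range]
      omega
    have hsum : ∑ i ∈ Finset.range (lead p x + 1),
        (if i ∈ S then -((digit p x i : ℤ) * p ^ i) else ((digit p x i : ℤ) * p ^ i))
        = (x : ℤ) - 2 * digit p x k * p ^ k := by
      have e1 : ∀ i ∈ Finset.range (lead p x + 1),
          (if i ∈ S then -((digit p x i : ℤ) * p ^ i) else ((digit p x i : ℤ) * p ^ i))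
          = (digit p x i : ℤ) * p ^ i - 2 * (if i ∈ S then (digit p x i : ℤ) * p ^ i else 0) := by
        intro i _
        split <;> ring
      rw [Finset.sum_congr rfl e1, Finset.sum_sub_distrib, ← Finset.mul_sum,
        Finset.sum_ite_mem, Finset.inter_eq_right.mpr hSsub]
      have hA : ∑ i ∈ Finset.range (lead p x + 1), ((digit p x i : ℤ) * p ^ i) = (x : ℤ) := by
        have hxm : x % p ^ (lead p x + 1) = x :=
          Nat.mod_eq_of_lt (Nat.lt_pow_succ_log_self hp x)
        calc ∑ i ∈ Finset.range (lead p x + 1), ((digit p x i : ℤ) * p ^ i)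
            = ((∑ i ∈ Finset.range (lead p x + 1), digit p x i * p ^ i : ℕ) : ℤ) := by
              push_cast; ring
          _ = (x : ℤ) := by rw [sum_digit_eq_mod, hxm]
      have hB : ∑ i ∈ S, ((digit p x i : ℤ) * p ^ i) = (digit p x k : ℤ) * p ^ k := by
        apply Finset.sum_eq_single_of_mem k (by rw [hmemS]; omega)
        intro b hb hbk
        rw [hmemS] at hb
        rw [hmin b (by omega) (by omega)]
        simp
      rw [hA, hB]
      ring
    have hcast : ((x - 2 * digit p x k * p ^ k : ℕ) : ℤ)
        = (x : ℤ) - 2 * digit p x k * p ^ k := by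
      push_cast [hle]
      ring
    rw [hsum, ← hcast, Int.toNat_natCast]
  · -- digit at position k of the result
    have hpk : 0 < p ^ k := Nat.pow_pos hp0
    have hdiv : (x - 2 * digit p x k * p ^ k) / p ^ k = x / p ^ k - 2 * digit p x k := by
      rw [show 2 * digit p x k * p ^ k = p ^ k * (2 * digit p x k) by ring] at hle ⊢
      exact Nat.sub_mul_div_of_le x (p ^ k) (2 * digit p x k) hle
    have hx1 : p ^ (k + 1) ≤ x :=
      le_trans (Nat.pow_le_pow_right (by omega) (by omega)) (pow_le_of_digit_ne_zero htd)
    set Q := x / p ^ (k + 1) with hQ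
    have hQ1 : 1 ≤ Q := (Nat.one_le_div_iff (Nat.pow_pos hp0)).mpr hx1
    have hxk : x / p ^ k = p * Q + digit p x k := by
      have h1 : x / p ^ k / p = Q := by
        rw [hQ, Nat.div_div_eq_div_mul, ← pow_succ]
      have h2 := Nat.div_add_mod (x / p ^ k) p
      rw [h1] at h2
      have : x / p ^ k % p = digit p x k := rfl
      omega
    show (x - 2 * digit p x k * p ^ k) / p ^ k % p = p - digit p x k
    rw [hdiv, hxk]
    have hmul : p * Q = p * (Q - 1) + p := by
      conv_lhs => rw [show Q = Q - 1 + 1 by omega]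
      ring
    rw [show p * Q + digit p x k - 2 * digit p x k = p * (Q - 1) + (p - digit p x k) by omega,
      Nat.mul_add_mod]
    exact Nat.mod_eq_of_lt (by omega)

end Aux
end SL2

/-- If `w ∈ C_v`, then the `p`-adic digits of `w` agree with those of `v`
in all positions `i` with `1 ≤ i < j(v)`. -/
theorem SL2.stmt0 (p : ℕ) (hp : p.Prime) (v : ℕ) (hv : 1 ≤ v)
    (w : ℕ) (hw : w ∈ SL2.Cset p v) (i : ℕ) (hi1 : 1 ≤ i) (hi2 : i < SL2.lead p v) :
    SL2.digit p w i = SL2.digit p v i := by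
  obtain ⟨-, hsim⟩ := hw
  have hp1 : 1 < p := hp.one_lt
  have hp0 : 0 < p := by omega
  -- the invariant
  set Q : ℕ → Prop := fun z =>
    (∀ j, 0 < j → j < SL2.lead p v → SL2.digit p z j = SL2.digit p v j) ∧
    (0 < SL2.lead p v → (SL2.digit p z 0 = 0 ↔ SL2.digit p v 0 = 0)) with hQ
  have key : ∀ x y, SL2.SimStep p (SL2.Dset p v) x y → (Q x ↔ Q y) := by
    intro x y hstep
    obtain ⟨hne, -, -, k, hkD, hkS, hy⟩ := hstep
    simp only [SL2.Dset, Finset.mem_filter, Finset.mem_range] at hkD hkS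
    obtain ⟨hkl, hkd⟩ := hkD
    obtain ⟨hle, hrefl, hdk⟩ := SL2.step_digits hp1 hkd hkl
    rw [hrefl] at hy
    subst hy
    have hdlt : SL2.digit p x k < p := SL2.digit_lt_base hp1 x k
    have hd1 : 1 ≤ SL2.digit p x k := Nat.one_le_iff_ne_zero.mpr hkd
    -- digits below k are unchanged
    have hlow : ∀ j, j < k → SL2.digit p (x - 2 * SL2.digit p x k * p ^ k) j = SL2.digit p x j := by
      intro j hj
      have hx : x = (x - 2 * SL2.digit p x k * p ^ k) + p ^ (j + 1) *
          (2 * SL2.digit p x k * p ^ (k - j - 1)) := by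
        have hpow : p ^ (j + 1) * p ^ (k - j - 1) = p ^ k := by
          rw [← pow_add]
          congr 1
          omega
        have : p ^ (j + 1) * (2 * SL2.digit p x k * p ^ (k - j - 1))
            = 2 * SL2.digit p x k * p ^ k := by
          rw [← hpow]; ring
        omega
      conv_rhs => rw [hx]
      rw [SL2.digit_add_pow_mul hp0]
    -- digit of the reflection at k is nonzero
    have hdky : SL2.digit p (x - 2 * SL2.digit p x k * p ^ k) k ≠ 0 := by
      rw [hdk]; omega
    constructor
    · intro hQx
      have hklv : SL2.lead p v ≤ k := by
        by_contra hc
        push_neg at hc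
        have hvk : SL2.digit p v k = 0 := by
          by_contra h0
          exact hkS ⟨hc, h0⟩
        rcases Nat.eq_zero_or_pos k with h | h
        · subst h
          have := (hQx.2 hc).mpr hvk
          exact hkd this
        · exact hkd ((hQx.1 k h hc).trans hvk)
      refine ⟨fun j hj1 hj2 => ?_, fun hL => ?_⟩
      · rw [hlow j (by omega)]
        exact hQx.1 j hj1 hj2
      · rw [hlow 0 (by omega)]
        exact hQx.2 hL
    · intro hQy
      have hklv : SL2.lead p v ≤ k := by
        by_contra hc
        push_neg at hc
        have hvk : SL2.digit p v k = 0 := by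
          by_contra h0
          exact hkS ⟨hc, h0⟩
        rcases Nat.eq_zero_or_pos k with h | h
        · subst h
          exact hdky ((hQy.2 hc).mpr hvk)
        · exact hdky ((hQy.1 k h hc).trans hvk)
      refine ⟨fun j hj1 hj2 => ?_, fun hL => ?_⟩
      · rw [← hlow j (by omega)]
        exact hQy.1 j hj1 hj2
      · rw [← hlow 0 (by omega)]
        exact hQy.2 hL
  have main : ∀ x y, SL2.Sim p (SL2.Dset p v) x y → (Q x ↔ Q y) := by
    intro x y h
    induction h with
    | rel a b hab => exact key a b hab
    | refl a => exact Iff.rfl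
    | symm a b _ ih => exact ih.symm
    | trans a b c _ _ ih1 ih2 => exact ih1.trans ih2
  have hQv : Q v := ⟨fun j _ _ => rfl, fun _ => Iff.rfl⟩
  exact ((main v w hsim).mp hQv).1 i hi1 hi2
end

section
/- For every v ∈ ℕ, the set C_v is infinite, and every w ∈ C_v satisfies w ≥ v. -/
open scoped Classical

namespace SL2

lemma digit_lt {p : ℕ} (hp : 2 ≤ p) (v i : ℕ) : digit p v i < p :=
  Nat.mod_lt _ (by omega)

lemma mod_succ_digit (p v i : ℕ) : v % p ^ (i+1) = v % p ^ i + digit p v i * p ^ i := by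
  rw [pow_succ, Nat.mod_mul]; unfold digit; ring

lemma digit_eq_mod_div (p v i : ℕ) : digit p v i = v % p ^ (i+1) / p ^ i := by
  rw [pow_succ, Nat.mod_mul_right_div_self]; rfl

lemma digit_eq_of_mod_eq {p x y n : ℕ} (h : x % p ^ n = y % p ^ n) {i : ℕ} (hi : i < n) :
    digit p x i = digit p y i := by
  have hx : x % p ^ (i+1) = y % p ^ (i+1) := by
    rw [← Nat.mod_mod_of_dvd x (pow_dvd_pow p hi), ← Nat.mod_mod_of_dvd y (pow_dvd_pow p hi), h]
  rw [digit_eq_mod_div, digit_eq_mod_div, hx]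

lemma sum_digit_mod (p v : ℕ) : ∀ n, (∑ i ∈ Finset.range n, digit p v i * p ^ i) = v % p ^ n := by
  intro n; induction n with
  | zero => simp [Nat.mod_one]
  | succ n ih => rw [Finset.sum_range_succ, ih, mod_succ_digit]

lemma lt_pow_lead {p : ℕ} (hp : 2 ≤ p) (v : ℕ) : v < p ^ (lead p v + 1) :=
  Nat.lt_pow_succ_log_self (by omega) v

lemma pow_lead_le {p v : ℕ} (hv : v ≠ 0) : p ^ lead p v ≤ v := Nat.pow_log_le_self p hv

lemma digit_lead_ne {p v : ℕ} (hp : 2 ≤ p) (hv : v ≠ 0) : digit p v (lead p v) ≠ 0 := by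
  have h1 : p ^ lead p v ≤ v := pow_lead_le hv
  have h2 : v < p ^ (lead p v + 1) := lt_pow_lead hp v
  have hply : 0 < p ^ lead p v := Nat.pow_pos (by omega)
  have hd1 : 1 ≤ v / p ^ lead p v := (Nat.le_div_iff_mul_le hply).2 (by omega)
  have hd2 : v / p ^ lead p v < p := by
    rw [Nat.div_lt_iff_lt_mul hply]; rw [pow_succ] at h2; nlinarith
  show v / p ^ lead p v % p ≠ 0
  rw [Nat.mod_eq_of_lt hd2]; omega

lemma mem_Dset {p x i : ℕ} : i ∈ Dset p x ↔ i < lead p x ∧ digit p x i ≠ 0 := by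
  simp [Dset]

lemma hull_eq {p v : ℕ} {S T : Finset ℕ} (hT : IsHull p v S T) : hull p v S = T := by
  have hex : ∃ T, IsHull p v S T := ⟨T, hT⟩
  have h2 := hex.choose_spec
  rw [hull, dif_pos hex]
  exact subset_antisymm (h2.2.2 T hT.1 hT.2.1) (hT.2.2 _ h2.1 h2.2.1)


lemma step {p x k : ℕ} (hp : 2 ≤ p) (hk : k ∈ Dset p x) :
    2 * digit p x k * p ^ k + p ^ k ≤ x ∧
    reflDownHull p x k = x - 2 * digit p x k * p ^ k ∧
    digit p (x - 2 * digit p x k * p ^ k) k = p - digit p x k ∧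
    (x - 2 * digit p x k * p ^ k) % p ^ k = x % p ^ k := by
  obtain ⟨hkL, hdk⟩ := mem_Dset.1 hk
  have hx0 : x ≠ 0 := by
    intro h; rw [h] at hdk; exact hdk (by simp [digit])
  have hdlt : digit p x k < p := digit_lt hp x k
  have hd1 : 1 ≤ digit p x k := Nat.pos_of_ne_zero hdk
  have hL1 : digit p x (lead p x) ≠ 0 := digit_lead_ne hp hx0
  have hwit : digit p x (lead p x - 1 + 1) ≠ 0 := by
    rwa [Nat.sub_add_cancel (show 1 ≤ lead p x by omega)]
  obtain ⟨m, hkm, hdm1, hzero, hmL⟩ :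
      ∃ m, k ≤ m ∧ digit p x (m+1) ≠ 0 ∧ (∀ i, k < i → i ≤ m → digit p x i = 0) ∧
        m + 1 ≤ lead p x := by
    have hPex : ∃ m, k ≤ m ∧ digit p x (m+1) ≠ 0 := ⟨lead p x - 1, by omega, hwit⟩
    refine ⟨Nat.find hPex, (Nat.find_spec hPex).1, (Nat.find_spec hPex).2, ?_, ?_⟩
    · intro i h1 h2
      by_contra hne
      exact Nat.find_min hPex (show i - 1 < Nat.find hPex by omega)
        ⟨by omega, by rwa [Nat.sub_add_cancel (show 1 ≤ i by omega)]⟩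
    · have h := Nat.find_min' hPex ⟨show k ≤ lead p x - 1 by omega, hwit⟩
      omega
  -- admissibility and hull
  have hadm : DownAdm p x (Finset.Icc k m) := by
    constructor
    · intro s hs hcond
      rw [Finset.mem_Icc] at hs
      rcases eq_or_ne s k with rfl | hne
      · exact hdk
      · exfalso
        rcases hcond with h0 | h0
        · omega
        · exact h0 (Finset.mem_Icc.2 ⟨by omega, by omega⟩)
    · intro s hs h0
      rw [Finset.mem_Icc] at hs
      rcases eq_or_ne s m with rfl | hne
      · exact absurd h0 hdm1
      · exact Finset.mem_Icc.2 ⟨by omega, by omega⟩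
  have hhull : IsHull p x {k} (Finset.Icc k m) := by
    refine ⟨hadm, by simp [Finset.singleton_subset_iff, Finset.mem_Icc, hkm], ?_⟩
    intro T' hT' hkT' i hi
    rw [Finset.mem_Icc] at hi
    have key : ∀ i, k ≤ i → i ≤ m → i ∈ T' := by
      intro i hki
      induction i, hki using Nat.le_induction with
      | base => intro _; exact hkT' (Finset.mem_singleton_self k)
      | succ n hn ih =>
        intro hnm
        exact hT'.2 n (ih (by omega)) (hzero (n+1) (by omega) hnm)
    exact key i hi.1 hi.2
  -- sum computations
  have hIccsub : Finset.Icc k m ⊆ Finset.range (lead p x + 1) := by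
    intro i hi; rw [Finset.mem_Icc] at hi; rw [Finset.mem_range]; omega
  have hsumT : (∑ i ∈ Finset.Icc k m, (digit p x i : ℤ) * (p:ℤ) ^ i)
      = (digit p x k : ℤ) * (p:ℤ) ^ k := by
    refine Finset.sum_eq_single_of_mem k (Finset.mem_Icc.2 ⟨le_refl k, hkm⟩) ?_
    intro i hi hne
    rw [Finset.mem_Icc] at hi
    rw [hzero i (by omega) hi.2]; simp
  have hsumall : (∑ i ∈ Finset.range (lead p x + 1), (digit p x i : ℤ) * (p:ℤ) ^ i) = (x : ℤ) := by
    have h1 := sum_digit_mod p x (lead p x + 1)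
    rw [Nat.mod_eq_of_lt (lt_pow_lead hp x)] at h1
    exact_mod_cast congrArg (Nat.cast (R := ℤ)) h1
  have hrefl : reflDown p x (Finset.Icc k m) = x - 2 * digit p x k * p ^ k := by
    rw [reflDown]
    have hsum : (∑ i ∈ Finset.range (lead p x + 1),
        (if i ∈ Finset.Icc k m then -((digit p x i : ℤ) * (p:ℤ) ^ i)
          else (digit p x i : ℤ) * (p:ℤ) ^ i))
        = ((x : ℤ) - (2 * digit p x k * p ^ k : ℕ)) := by
      have hcong : ∀ i ∈ Finset.range (lead p x + 1),
          (if i ∈ Finset.Icc k m then -((digit p x i : ℤ) * (p:ℤ) ^ i)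
            else (digit p x i : ℤ) * (p:ℤ) ^ i)
          = (digit p x i : ℤ) * (p:ℤ) ^ i
            - 2 * (if i ∈ Finset.Icc k m then (digit p x i : ℤ) * (p:ℤ) ^ i else 0) := by
        intro i _; split <;> ring
      rw [Finset.sum_congr rfl hcong, Finset.sum_sub_distrib, hsumall, ← Finset.mul_sum,
        Finset.sum_ite_mem, Finset.inter_eq_right.2 hIccsub, hsumT]
      push_cast; ring
    rw [hsum]; exact Int.toNat_sub' _ _
  have hrdh : reflDownHull p x k = x - 2 * digit p x k * p ^ k := by
    rw [reflDownHull, hull_eq hhull, hrefl]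
  -- the bound
  have hApos : 0 < p ^ k := Nat.pow_pos (by omega)
  have hBpos : 0 < p ^ (m+1) := Nat.pow_pos (by omega)
  have hpair : digit p x k * p ^ k + digit p x (m+1) * p ^ (m+1) ≤ x % p ^ (m+2) := by
    rw [← sum_digit_mod]
    have hsub : ({k, m+1} : Finset ℕ) ⊆ Finset.range (m+2) := by
      intro i hi
      simp only [Finset.mem_insert, Finset.mem_singleton] at hi
      rw [Finset.mem_range]; omega
    calc digit p x k * p ^ k + digit p x (m+1) * p ^ (m+1)
        = ∑ i ∈ ({k, m+1} : Finset ℕ), digit p x i * p ^ i := (Finset.sum_pair (f := fun i => digit p x i * p ^ i) (show k ≠ m+1 by omega)).symm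
      _ ≤ _ := Finset.sum_le_sum_of_subset hsub
  have he1 : 1 ≤ digit p x (m+1) := Nat.pos_of_ne_zero hdm1
  have hmodle : x % p ^ (m+2) ≤ x := Nat.mod_le x _
  have hpow1 : p ^ (k+1) ≤ p ^ (m+1) := Nat.pow_le_pow_right (by omega) (by omega)
  have hksucc : p ^ (k+1) = p ^ k * p := pow_succ p k
  have hbound : 2 * digit p x k * p ^ k + p ^ k ≤ x := by
    nlinarith [Nat.mul_le_mul_right (p ^ k) (show digit p x k + 1 ≤ p by omega),
      Nat.mul_le_mul_right (p ^ (m+1)) he1]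
  -- structure of x
  have hdiv : ∀ t, t ≤ m - k → x / p ^ (m+1-t) = (x / p ^ (m+1)) * p ^ t := by
    intro t
    induction t with
    | zero => intro _; simp
    | succ t ih =>
      intro ht
      have hidx : m + 1 - (t+1) = m - t := by omega
      have hidx2 : m + 1 - t = (m - t) + 1 := by omega
      have h1 : x / p ^ (m - t) = p * (x / p ^ ((m-t)+1)) + digit p x (m-t) := by
        have hd2 : x / p ^ ((m-t)+1) = x / p ^ (m-t) / p := by
          rw [Nat.div_div_eq_div_mul, pow_succ]
        rw [hd2]
        show x / p ^ (m - t) = p * (x / p ^ (m-t) / p) + x / p ^ (m-t) % p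
        exact (Nat.div_add_mod (x / p ^ (m-t)) p).symm
      have h0 : digit p x (m - t) = 0 := hzero _ (by omega) (by omega)
      have h2 := ih (by omega)
      rw [hidx2] at h2
      rw [hidx, h1, h0, h2, pow_succ]; ring
  have hw : x / p ^ (k+1) = (x / p ^ (m+1)) * p ^ (m-k) := by
    have h := hdiv (m-k) (le_refl _)
    have hidx : m + 1 - (m-k) = k+1 := by omega
    rwa [hidx] at h
  have hw1 : 1 ≤ x / p ^ (m+1) := by
    refine (Nat.one_le_div_iff hBpos).2 ?_
    nlinarith
  have hpow2 : p ^ (k+1) * p ^ (m-k) = p ^ (m+1) := by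
    rw [← pow_add]; congr 1; omega
  have hdecomp : x = x % p ^ k + digit p x k * p ^ k + (x / p ^ (m+1)) * p ^ (m+1) := by
    have h1 : p ^ (k+1) * (x / p ^ (k+1)) + x % p ^ (k+1) = x := Nat.div_add_mod x (p^(k+1))
    rw [hw] at h1
    have hmod : x % p ^ (k+1) = x % p ^ k + digit p x k * p ^ k := mod_succ_digit p x k
    have hprod : p ^ (k+1) * ((x / p ^ (m+1)) * p ^ (m-k)) = (x / p ^ (m+1)) * p ^ (m+1) := by
      rw [← hpow2]; ring
    omega
  obtain ⟨W, hWA, hWge, hWq⟩ : ∃ W, W * p ^ k = (x / p ^ (m+1)) * p ^ (m+1) ∧ p ≤ W ∧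
      ∃ q, 1 ≤ q ∧ W = q * p := by
    refine ⟨(x / p ^ (m+1)) * p ^ (m+1-k), ?_, ?_, (x / p ^ (m+1)) * p ^ (m-k), ?_, ?_⟩
    · rw [mul_assoc, ← pow_add]
      congr 2; omega
    · have h1 : p ^ 1 ≤ p ^ (m+1-k) := Nat.pow_le_pow_right (by omega) (by omega)
      calc p = 1 * p ^ 1 := by ring
        _ ≤ (x / p ^ (m+1)) * p ^ (m+1-k) := Nat.mul_le_mul hw1 h1
    · have := Nat.one_le_pow (m-k) p (show 0 < p by omega)
      nlinarith
    · rw [mul_assoc, ← pow_succ]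
      congr 2; omega
  obtain ⟨q, hq1, hqW⟩ := hWq
  have hWd : p ≤ W → digit p x k ≤ W := by omega
  have hxeq : x = x % p ^ k + (digit p x k + W) * p ^ k := by
    have h1 : (digit p x k + W) * p ^ k = digit p x k * p ^ k + W * p ^ k := by ring
    omega
  have hsubmul : (W - digit p x k) * p ^ k = W * p ^ k - digit p x k * p ^ k := Nat.sub_mul _ _ _
  have hmulle : digit p x k * p ^ k ≤ W * p ^ k := Nat.mul_le_mul_right _ (by omega)
  have h2d : 2 * digit p x k * p ^ k = digit p x k * p ^ k + digit p x k * p ^ k := by ring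
  have hAsum : (digit p x k + W) * p ^ k = digit p x k * p ^ k + W * p ^ k := by ring
  have hyeq : x - 2 * digit p x k * p ^ k = x % p ^ k + (W - digit p x k) * p ^ k := by
    omega
  have hlo : x % p ^ k < p ^ k := Nat.mod_lt _ hApos
  have hydig : digit p (x - 2 * digit p x k * p ^ k) k = p - digit p x k := by
    have hdivy : (x - 2 * digit p x k * p ^ k) / p ^ k = W - digit p x k := by
      rw [hyeq, Nat.add_mul_div_right _ _ hApos, Nat.div_eq_of_lt hlo, zero_add]
    show (x - 2 * digit p x k * p ^ k) / p ^ k % p = p - digit p x k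
    rw [hdivy]
    have hWd2 : W - digit p x k = (p - digit p x k) + (q - 1) * p := by
      have hsm : (q - 1) * p = q * p - 1 * p := Nat.sub_mul _ _ _
      have hqp : 1 * p ≤ q * p := Nat.mul_le_mul_right _ hq1
      omega
    rw [hWd2, Nat.add_mul_mod_self_right, Nat.mod_eq_of_lt (by omega)]
  have hymod : (x - 2 * digit p x k * p ^ k) % p ^ k = x % p ^ k := by
    rw [hyeq, Nat.add_mul_mod_self_right, Nat.mod_mod_of_dvd x dvd_rfl]
  exact ⟨hbound, hrdh, hydig, hymod⟩

lemma mod_pow_step {p n k c y : ℕ} (hnk : n ≤ k) : (y + c * p ^ k) % p ^ n = y % p ^ n := by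
  have h : c * p ^ k = (c * p ^ (k-n)) * p ^ n := by
    rw [mul_assoc, ← pow_add]; congr 2; omega
  rw [h, Nat.add_mul_mod_self_right]

/-- the invariant -/
def Inv (p v x : ℕ) : Prop :=
  x % p ^ lead p v = v % p ^ lead p v ∧
  (digit p x (lead p v) = digit p v (lead p v) ∨
    digit p x (lead p v) = p - digit p v (lead p v)) ∧
  p ^ lead p v ≤ x ∧ x % 2 = v % 2

lemma inv_iff_of_simStep {p v x y : ℕ} (hp : 2 ≤ p) (hv : 1 ≤ v)
    (h : SimStep p (Dset p v) x y) : Inv p v x ↔ Inv p v y := by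
  obtain ⟨hne, hSx, hSy, k, hkx, hkS, hyeq⟩ := h
  obtain ⟨hbound, hrdh, hydig, hymod⟩ := step hp hkx
  obtain ⟨hkL, hdk⟩ := mem_Dset.1 hkx
  have hd1 : 1 ≤ digit p x k := Nat.pos_of_ne_zero hdk
  have hdlt : digit p x k < p := digit_lt hp x k
  have halt : digit p v (lead p v) < p := digit_lt hp v _
  have ha1 : 1 ≤ digit p v (lead p v) := Nat.pos_of_ne_zero (digit_lead_ne hp (by omega))
  rw [hrdh] at hyeq
  have heven : 2 * digit p x k * p ^ k = 2 * (digit p x k * p ^ k) := by ring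
  have heq : x = y + 2 * (digit p x k * p ^ k) := by omega
  have hyd : digit p y k = p - digit p x k := by rw [hyeq]; exact hydig
  have hymod' : y % p ^ k = x % p ^ k := by rw [hyeq]; exact hymod
  have hypow : p ^ k ≤ y := by omega
  have heq2 : x = y + (2 * digit p x k) * p ^ k := by omega
  have hmodn : ∀ n, n ≤ k → y % p ^ n = x % p ^ n := by
    intro n hn
    rw [heq2, mod_pow_step hn]
  constructor
  · rintro ⟨h1, h2, h3, h4⟩
    have hjk : lead p v ≤ k := by
      by_contra hc
      push_neg at hc
      have : digit p x k = digit p v k := digit_eq_of_mod_eq h1 hc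
      exact hkS (mem_Dset.2 ⟨hc, by omega⟩)
    have hplek : p ^ lead p v ≤ p ^ k := Nat.pow_le_pow_right (by omega) hjk
    refine ⟨by rw [hmodn _ hjk]; exact h1, ?_, by omega, by omega⟩
    rcases eq_or_lt_of_le hjk with heqk | hlt
    · rw [← heqk] at hyd hdlt hd1
      omega
    · have hmm : y % p ^ (lead p v + 1) = x % p ^ (lead p v + 1) := hmodn _ hlt
      have hdd := digit_eq_of_mod_eq hmm (Nat.lt_succ_self (lead p v))
      rw [hdd]; exact h2
  · rintro ⟨h1, h2, h3, h4⟩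
    have hjk : lead p v ≤ k := by
      by_contra hc
      push_neg at hc
      have hdy : digit p y k = digit p v k := digit_eq_of_mod_eq h1 hc
      refine hkS (mem_Dset.2 ⟨hc, ?_⟩)
      rw [← hdy, hyd]; omega
    have hplek : p ^ lead p v ≤ p ^ k := Nat.pow_le_pow_right (by omega) hjk
    refine ⟨by rw [← hmodn _ hjk]; exact h1, ?_, by omega, by omega⟩
    rcases eq_or_lt_of_le hjk with heqk | hlt
    · rw [← heqk] at hyd hdlt hd1
      omega
    · have hmm : y % p ^ (lead p v + 1) = x % p ^ (lead p v + 1) := hmodn _ hlt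
      have hdd := digit_eq_of_mod_eq hmm (Nat.lt_succ_self (lead p v))
      rw [← hdd]; exact h2

lemma inv_of_sim {p v w : ℕ} (hp : 2 ≤ p) (hv : 1 ≤ v)
    (h : Sim p (Dset p v) v w) : Inv p v w := by
  have hiff : ∀ x y, Relation.EqvGen (SimStep p (Dset p v)) x y → (Inv p v x ↔ Inv p v y) := by
    intro x y hxy
    induction hxy with
    | rel a b hab => exact inv_iff_of_simStep hp hv hab
    | refl a => exact Iff.rfl
    | symm a b hab ih => exact ih.symm
    | trans a b c h1 h2 ih1 ih2 => exact ih1.trans ih2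
  have hInvV : Inv p v v :=
    ⟨rfl, Or.inl rfl, pow_lead_le (by omega), rfl⟩
  exact (hiff v w h).1 hInvV

lemma ge_of_inv {p v x : ℕ} (hp : p.Prime) (hv : 1 ≤ v) (hI : Inv p v x) : v ≤ x := by
  have hp2 : 2 ≤ p := hp.two_le
  obtain ⟨h1, h2, h3, h4⟩ := hI
  by_cases hbig : p ^ (lead p v + 1) ≤ x
  · have := lt_pow_lead hp2 v
    omega
  · push_neg at hbig
    have hxx : x = x % p ^ lead p v + digit p x (lead p v) * p ^ lead p v := by
      have := mod_succ_digit p x (lead p v)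
      rw [Nat.mod_eq_of_lt hbig] at this
      omega
    have hvv : v = v % p ^ lead p v + digit p v (lead p v) * p ^ lead p v := by
      have := mod_succ_digit p v (lead p v)
      rw [Nat.mod_eq_of_lt (lt_pow_lead hp2 v)] at this
      omega
    have ha1 : 1 ≤ digit p v (lead p v) := Nat.pos_of_ne_zero (digit_lead_ne hp2 (by omega))
    have halt : digit p v (lead p v) < p := digit_lt hp2 v _
    have hdig : digit p x (lead p v) = digit p v (lead p v) := by
      rcases hp.eq_two_or_odd' with rfl | hodd
      · omega
      · rcases h2 with h2 | h2
        · exact h2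
        · exfalso
          have hP : p ^ lead p v % 2 = 1 := Nat.odd_iff.1 (hodd.pow)
          have hBP : (digit p x (lead p v) * p ^ lead p v) % 2 = digit p x (lead p v) % 2 := by
            rw [Nat.mul_mod, hP, mul_one, Nat.mod_mod_of_dvd _ dvd_rfl]
          have hAP : (digit p v (lead p v) * p ^ lead p v) % 2 = digit p v (lead p v) % 2 := by
            rw [Nat.mul_mod, hP, mul_one, Nat.mod_mod_of_dvd _ dvd_rfl]
          have hpodd : p % 2 = 1 := Nat.odd_iff.1 hodd
          omega
    rw [hxx, hdig, h1, ← hvv]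


noncomputable def auxF (p x : ℕ) : ℕ :=
  x % p ^ lead p x + (p - digit p x (lead p x)) * p ^ lead p x + p ^ (lead p x + 1)

lemma auxF_facts {p x : ℕ} (hp : 2 ≤ p) (hx : 1 ≤ x) :
    lead p (auxF p x) = lead p x + 1 ∧
    auxF p x % p ^ lead p x = x % p ^ lead p x ∧
    x < auxF p x ∧
    lead p x ∈ Dset p (auxF p x) ∧
    reflDownHull p (auxF p x) (lead p x) = x := by
  have hd1 : 1 ≤ digit p x (lead p x) := Nat.pos_of_ne_zero (digit_lead_ne hp (by omega))
  have hdlt : digit p x (lead p x) < p := digit_lt hp x _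
  have hPpos : 0 < p ^ lead p x := Nat.pow_pos (by omega)
  have hlo : x % p ^ lead p x < p ^ lead p x := Nat.mod_lt _ hPpos
  have hFdef : auxF p x = x % p ^ lead p x
      + (p - digit p x (lead p x)) * p ^ lead p x + p ^ (lead p x + 1) := rfl
  have hFeq : auxF p x = x % p ^ lead p x
      + ((p - digit p x (lead p x)) + p) * p ^ lead p x := by
    rw [hFdef, pow_succ]; ring
  have hQP : p ^ (lead p x + 1) = p * p ^ lead p x := by ring
  have hRQ : p ^ (lead p x + 2) = p * p ^ (lead p x + 1) := by ring
  have h1 : (p - digit p x (lead p x)) * p ^ lead p x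
      + digit p x (lead p x) * p ^ lead p x = p * p ^ lead p x := by
    rw [← add_mul]; congr 1; omega
  have h5 : p ^ lead p x ≤ digit p x (lead p x) * p ^ lead p x :=
    Nat.le_mul_of_pos_left _ (by omega)
  have h8 : 2 * p ^ (lead p x + 1) ≤ p * p ^ (lead p x + 1) :=
    Nat.mul_le_mul_right _ (by omega)
  have hF12 : p ^ (lead p x + 1) ≤ auxF p x ∧ auxF p x < p ^ (lead p x + 2) := by
    generalize hR : p ^ (lead p x + 2) = R at hRQ ⊢
    generalize hQ : p ^ (lead p x + 1) = Q at hQP hRQ hFdef h8 ⊢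
    generalize hP : p ^ lead p x = P at hQP h1 h5 hlo hFdef
    omega
  have hF1 := hF12.1
  have hF2 := hF12.2
  have hlead : lead p (auxF p x) = lead p x + 1 :=
    Nat.log_eq_of_pow_le_of_lt_pow hF1 hF2
  have hmodF : auxF p x % p ^ lead p x = x % p ^ lead p x := by
    rw [hFeq, Nat.add_mul_mod_self_right, Nat.mod_mod_of_dvd _ dvd_rfl]
  have hdigF : digit p (auxF p x) (lead p x) = p - digit p x (lead p x) := by
    show auxF p x / p ^ lead p x % p = _
    rw [hFeq, Nat.add_mul_div_right _ _ hPpos, Nat.div_eq_of_lt hlo, zero_add,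
      Nat.add_mod_right, Nat.mod_eq_of_lt (by omega)]
  have hmem : lead p x ∈ Dset p (auxF p x) :=
    mem_Dset.2 ⟨by rw [hlead]; omega, by rw [hdigF]; omega⟩
  have hxlt : x < auxF p x := lt_of_lt_of_le (lt_pow_lead hp x) hF1
  have hrefl : reflDownHull p (auxF p x) (lead p x) = x := by
    obtain ⟨hb, hr, _, _⟩ := step hp hmem
    rw [hr, hdigF]
    have hxdecomp : x = x % p ^ lead p x + digit p x (lead p x) * p ^ lead p x := by
      have h := mod_succ_digit p x (lead p x)
      rw [Nat.mod_eq_of_lt (lt_pow_lead hp x)] at h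
      omega
    have h2e : 2 * (p - digit p x (lead p x)) * p ^ lead p x
        = (p - digit p x (lead p x)) * p ^ lead p x
          + (p - digit p x (lead p x)) * p ^ lead p x := by ring
    generalize hQ : p ^ (lead p x + 1) = Q at hQP hFdef ⊢
    generalize hP : p ^ lead p x = P at hQP h1 h5 hlo hFdef hxdecomp h2e ⊢
    omega
  exact ⟨hlead, hmodF, hxlt, hmem, hrefl⟩


end SL2

open SL2 in
/-- For every `v ∈ ℕ`, the set `C_v` is infinite and every `w ∈ C_v`
satisfies `w ≥ v`. -/
theorem SL2.stmt1 (p : ℕ) (hp : p.Prime) (v : ℕ) (hv : 1 ≤ v) :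
    (SL2.Cset p v).Infinite ∧ ∀ w ∈ SL2.Cset p v, v ≤ w := by
  have hp2 : 2 ≤ p := hp.two_le
  have hsubD : ∀ z, v ≤ z → z % p ^ lead p v = v % p ^ lead p v →
      Dset p v ⊆ Dset p z := by
    intro z hz hzm i hi
    obtain ⟨hi1, hi2⟩ := mem_Dset.1 hi
    refine mem_Dset.2 ⟨lt_of_lt_of_le hi1 (Nat.log_mono_right hz), ?_⟩
    rw [digit_eq_of_mod_eq hzm hi1]; exact hi2
  constructor
  · classical
    have hchain : ∀ n, (v ≤ (auxF p)^[n] v ∧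
        (auxF p)^[n] v % p ^ lead p v = v % p ^ lead p v) ∧
        Sim p (Dset p v) v ((auxF p)^[n] v) := by
      intro n
      induction n with
      | zero => exact ⟨⟨le_refl v, rfl⟩, Relation.EqvGen.refl v⟩
      | succ n ih =>
        obtain ⟨⟨hle, hmod⟩, hsim⟩ := ih
        have hx1 : 1 ≤ (auxF p)^[n] v := le_trans hv hle
        obtain ⟨hlead, hmodF, hxlt, hmem, hrefl⟩ := auxF_facts hp2 hx1
        have hjL : lead p v ≤ lead p ((auxF p)^[n] v) := Nat.log_mono_right hle
        have hgn1 : (auxF p)^[n+1] v = auxF p ((auxF p)^[n] v) :=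
          Function.iterate_succ_apply' _ _ _
        have hJ1 : v ≤ (auxF p)^[n+1] v := by rw [hgn1]; omega
        have hJ2 : (auxF p)^[n+1] v % p ^ lead p v = v % p ^ lead p v := by
          rw [hgn1,
            ← Nat.mod_mod_of_dvd (auxF p ((auxF p)^[n] v)) (pow_dvd_pow p hjL), hmodF,
            Nat.mod_mod_of_dvd _ (pow_dvd_pow p hjL), hmod]
        have hstep : SimStep p (Dset p v) ((auxF p)^[n+1] v) ((auxF p)^[n] v) := by
          rw [hgn1]
          refine ⟨by omega, hsubD _ (by omega) (by rw [← hgn1]; exact hJ2),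
            hsubD _ hle hmod, lead p ((auxF p)^[n] v), hmem, ?_, hrefl.symm⟩
          intro hc
          have := (mem_Dset.1 hc).1
          omega
        refine ⟨⟨hJ1, hJ2⟩, ?_⟩
        exact Relation.EqvGen.trans _ _ _ hsim
          (Relation.EqvGen.symm _ _ (Relation.EqvGen.rel _ _ hstep))
    have hltsucc : ∀ n, (auxF p)^[n] v < (auxF p)^[n+1] v := by
      intro n
      have hx1 : 1 ≤ (auxF p)^[n] v := le_trans hv (hchain n).1.1
      have := (auxF_facts hp2 hx1).2.2.1
      rw [Function.iterate_succ_apply' (auxF p) n v]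
      exact this
    have hmono : StrictMono (fun n => (auxF p)^[n] v) := strictMono_nat_of_lt_succ hltsucc
    exact Set.infinite_of_injective_forall_mem hmono.injective
      (fun n => ⟨le_trans hv (hchain n).1.1, (hchain n).2⟩)
  · intro w hw
    exact ge_of_inv hp hv (inv_of_sim hp2 hv hw.2)
end

section
/- Let e ∈ {1,…,p−1} and let v ∈ ⟨e⟩_p with v ≠ e. Then 0 ∈ D_v; that is, a_0(v) ≠ 0 and 0 < j(v). -/
open scoped Classical

namespace SL2

lemma digit_zero (p v : ℕ) : digit p v 0 = v % p := by simp [digit]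

lemma sum_digit_range (p : ℕ) (v k : ℕ) :
    ∑ i ∈ Finset.range k, digit p v i * p ^ i = v % p ^ k := by
  induction k with
  | zero => simp [Nat.mod_one]
  | succ k ih =>
    rw [Finset.sum_range_succ, ih]
    have h1 : digit p v k = v % p ^ (k+1) / p ^ k := by
      rw [digit, ← Nat.mod_mul_right_div_self, pow_succ]
    have h2 : v % p ^ (k+1) % p ^ k = v % p ^ k :=
      Nat.mod_mod_of_dvd _ (pow_dvd_pow p (Nat.le_succ k))
    rw [h1, ← h2]
    exact Nat.mod_add_div' _ _

lemma sum_digit_lead (p : ℕ) (hp : 1 < p) (v : ℕ) :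
    ∑ i ∈ Finset.range (lead p v + 1), digit p v i * p ^ i = v := by
  rw [sum_digit_range]
  exact Nat.mod_eq_of_lt (Nat.lt_pow_succ_log_self hp v)

lemma reflDown_sum_eq (p : ℕ) (hp : 1 < p) (v : ℕ) (S : Finset ℕ) :
    (∑ i ∈ Finset.range (lead p v + 1),
      (if i ∈ S then -((digit p v i : ℤ) * p ^ i) else ((digit p v i : ℤ) * p ^ i)))
    = (v : ℤ) - 2 * ∑ i ∈ Finset.range (lead p v + 1),
        (if i ∈ S then ((digit p v i : ℤ) * p ^ i) else 0) := by
  have hv : (∑ i ∈ Finset.range (lead p v + 1), ((digit p v i : ℤ) * p ^ i)) = v := by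
    calc (∑ i ∈ Finset.range (lead p v + 1), ((digit p v i : ℤ) * p ^ i))
        = ((∑ i ∈ Finset.range (lead p v + 1), digit p v i * p ^ i : ℕ) : ℤ) := by
          push_cast; ring
      _ = v := by rw [sum_digit_lead p hp v]
  rw [Finset.mul_sum, ← hv, ← Finset.sum_sub_distrib]
  apply Finset.sum_congr rfl
  intro i _
  split_ifs <;> ring

lemma M_decomp (p v : ℕ) (S : Finset ℕ) :
    ∃ c : ℤ, ∑ i ∈ Finset.range (lead p v + 1),
        (if i ∈ S then ((digit p v i : ℤ) * p ^ i) else 0)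
      = (if 0 ∈ S then ((v % p : ℕ) : ℤ) else 0) + p * c := by
  refine ⟨∑ i ∈ Finset.range (lead p v),
      (if i + 1 ∈ S then ((digit p v (i+1) : ℤ) * p ^ i) else 0), ?_⟩
  rw [Finset.sum_range_succ', Finset.mul_sum]
  have h0 : (if 0 ∈ S then ((digit p v 0 : ℤ) * p ^ 0) else 0)
      = (if 0 ∈ S then ((v % p : ℕ) : ℤ) else 0) := by
    split_ifs <;> simp [digit_zero]
  rw [h0, add_comm]
  congr 1
  apply Finset.sum_congr rfl
  intro i _
  split_ifs <;> ring

lemma step_lemma (p : ℕ) (hp : 1 < p) (v : ℕ) (S : Finset ℕ) (hD : DownAdm p v S)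
    (hw : 1 ≤ reflDown p v S) :
    (((reflDown p v S : ℤ) ≡ (v : ℤ) [ZMOD (2*p)]) ∨
      ((reflDown p v S : ℤ) ≡ -(v : ℤ) [ZMOD (2*p)])) ∧
    (reflDown p v S % p ≠ 0 ↔ v % p ≠ 0) := by
  set w := reflDown p v S with hwdef
  obtain ⟨c, hc⟩ := M_decomp p v S
  have hZ : (w : ℤ) = (v : ℤ) - 2 * ((if 0 ∈ S then ((v % p : ℕ) : ℤ) else 0) + p * c) := by
    rw [hwdef, reflDown]
    rw [Int.toNat_of_nonneg, reflDown_sum_eq p hp v S, hc]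
    · by_contra hneg
      push_neg at hneg
      have : (reflDown p v S : ℤ) = 0 := by
        rw [reflDown, Int.toNat_of_nonpos (le_of_lt hneg)]
        rfl
      rw [reflDown] at this
      have : reflDown p v S = 0 := by
        rw [reflDown, Int.toNat_of_nonpos (le_of_lt hneg)]
      omega
  have hdiv : (v : ℤ) = p * ((v / p : ℕ) : ℤ) + ((v % p : ℕ) : ℤ) := by
    exact_mod_cast (Nat.div_add_mod v p).symm
  by_cases h0 : 0 ∈ S
  · have hd0 : v % p ≠ 0 := by
      have := hD.1 0 h0 (Or.inl rfl)
      rwa [digit_zero] at this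
    simp only [h0, if_true] at hZ
    constructor
    · right
      rw [Int.ModEq]
      have : (w : ℤ) = -(v : ℤ) + 2 * p * (((v / p : ℕ) : ℤ) - c) := by
        rw [hZ]; linear_combination 2 * hdiv
      rw [this, Int.add_mul_emod_self_left]
    · constructor
      · intro _; exact hd0
      · intro _ hw0
        have hpdvd : (p : ℤ) ∣ (w : ℤ) := by
          have : (p : ℕ) ∣ w := Nat.dvd_of_mod_eq_zero hw0
          exact_mod_cast Int.natCast_dvd_natCast.mpr this
        have hpv : (p : ℤ) ∣ (v : ℤ) := by
          obtain ⟨k, hk⟩ := hpdvd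
          refine ⟨2 * ((v / p : ℕ) : ℤ) - 2 * c - k, ?_⟩
          linear_combination 2 * hdiv + hZ - hk
        have : (p : ℕ) ∣ v := by exact_mod_cast hpv
        exact hd0 (Nat.dvd_iff_mod_eq_zero.mp this)
  · simp only [h0, if_false, zero_add] at hZ
    have hmod : (w : ℤ) ≡ (v : ℤ) [ZMOD (2*p)] := by
      rw [Int.ModEq]
      have : (w : ℤ) = (v : ℤ) + 2 * p * (-c) := by rw [hZ]; ring
      rw [this, Int.add_mul_emod_self_left]
    constructor
    · exact Or.inl hmod
    · have : w % p = v % p := by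
        have h1 : (w : ℤ) % p = (v : ℤ) % p := by
          have : (w : ℤ) = (v : ℤ) + p * (-2 * c) := by rw [hZ]; ring
          rw [this, Int.add_mul_emod_self_left]
        have h2 : ((w % p : ℕ) : ℤ) = ((v % p : ℕ) : ℤ) := by
          push_cast
          omega
        exact_mod_cast h2
      rw [this]


lemma inv_of_reach (p : ℕ) (hp : 1 < p) (e : ℕ) (he1 : 1 ≤ e) (hep : e < p)
    (v : ℕ) (h : Relation.ReflTransGen (BlockAdj p) e v) :
    v % p ≠ 0 ∧ (((v : ℤ) ≡ (e : ℤ) [ZMOD (2*p)]) ∨ ((v : ℤ) ≡ -(e : ℤ) [ZMOD (2*p)])) := by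
  induction h with
  | refl =>
    refine ⟨by rw [Nat.mod_eq_of_lt hep]; omega, Or.inl (Int.ModEq.refl _)⟩
  | @tail b c hab hbc ih =>
    obtain ⟨⟨hb1, hc1⟩, hcase⟩ := hbc
    rcases hcase with ⟨S, hS, hc⟩ | ⟨S, hS, hb⟩
    · have hst := step_lemma p hp b S hS.1 (hc ▸ hc1)
      rw [← hc] at hst
      refine ⟨hst.2.mpr ih.1, ?_⟩
      rcases hst.1 with h1 | h1 <;> rcases ih.2 with h2 | h2
      · exact Or.inl (h1.trans h2)
      · exact Or.inr (h1.trans h2)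
      · exact Or.inr (h1.trans h2.neg)
      · exact Or.inl (h1.trans (neg_neg (e : ℤ) ▸ h2.neg))
    · have hst := step_lemma p hp c S hS.1 (hb ▸ hb1)
      rw [← hb] at hst
      refine ⟨hst.2.mp ih.1, ?_⟩
      have h1 : ((c : ℤ) ≡ (b : ℤ) [ZMOD (2*p)]) ∨ ((c : ℤ) ≡ -(b : ℤ) [ZMOD (2*p)]) := by
        rcases hst.1 with h1 | h1
        · exact Or.inl h1.symm
        · exact Or.inr (neg_neg (c : ℤ) ▸ h1.neg).symm
      rcases h1 with h1 | h1 <;> rcases ih.2 with h2 | h2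
      · exact Or.inl (h1.trans h2)
      · exact Or.inr (h1.trans h2)
      · exact Or.inr (h1.trans h2.neg)
      · exact Or.inl (h1.trans (neg_neg (e : ℤ) ▸ h2.neg))


end SL2


/-- For `e ∈ {1,…,p−1}` and `v ∈ ⟨e⟩_p` with `v ≠ e` we have `0 ∈ D_v`. -/
theorem SL2.stmt3 (p : ℕ) (hp : p.Prime) (e : ℕ) (he1 : 1 ≤ e) (he2 : e ≤ p - 1)
    (v : ℕ) (hv : v ∈ SL2.block p e) (hne : v ≠ e) :
    0 ∈ SL2.Dset p v := by
  obtain ⟨hv1, hreach⟩ := hv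
  have hp1 : 1 < p := hp.one_lt
  have hep : e < p := by omega
  obtain ⟨hd0, hmod⟩ := SL2.inv_of_reach p hp1 e he1 hep v hreach
  simp only [SL2.Dset, Finset.mem_filter, Finset.mem_range]
  refine ⟨?_, by rw [SL2.digit_zero]; exact hd0⟩
  have hpv : p ≤ v := by
    by_contra hlt
    push_neg at hlt
    rcases hmod with h | h
    · obtain ⟨k, hk⟩ := h.dvd
      have hub : 2 * (p : ℤ) * k < 2 * p * 1 := by rw [← hk]; omega
      have hlb : 2 * (p : ℤ) * (-1) < 2 * p * k := by rw [← hk]; omega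
      have hk1 : k < 1 := lt_of_mul_lt_mul_left hub (by positivity)
      have hk2 : -1 < k := lt_of_mul_lt_mul_left hlb (by positivity)
      have hk0 : k = 0 := by omega
      rw [hk0, mul_zero] at hk
      have : e = v := by exact_mod_cast sub_eq_zero.mp hk
      omega
    · obtain ⟨k, hk⟩ := h.dvd
      have hub : 2 * (p : ℤ) * k < 2 * p * 0 := by rw [← hk]; omega
      have hlb : 2 * (p : ℤ) * (-1) < 2 * p * k := by rw [← hk]; omega
      have hk1 : k < 0 := lt_of_mul_lt_mul_left hub (by positivity)
      have hk2 : -1 < k := lt_of_mul_lt_mul_left hlb (by positivity)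
      omega
  exact Nat.log_pos hp1 hpv
end
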